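/- Let A be an n×n symmetric positive definite matrix with eigenvalues λ_1 ≥ … ≥ λ_n > 0, D symmetric, and X the solution of AX+XA=D. For any 1 ≤ ℓ̄ < n and τ > 0, there exists a matrix X_L of rank at most ℓ̄ such that ‖e^{-τA} X e^{-τA} − X_L‖_2² ≤ (3/(4λ_n²)) e^{-2τ(λ_n + λ_{n−ℓ̄})} ‖D‖_F². -/

import Mathlib

open Matrix


/-- The Frobenius norm of a real matrix. -/
noncomputable def frobNorm {n : ℕ} (M : Matrix (Fin n) (Fin n) ℝ) : ℝ :=
  Real.sqrt (∑ i, ∑ j, (M i j) ^ 2)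

/-- The spectral (ℓ²-operator) norm of a real matrix. -/
noncomputable def l2Norm {n : ℕ} (M : Matrix (Fin n) (Fin n) ℝ) : ℝ :=
  ‖Matrix.toEuclideanCLM (𝕜 := ℝ) M‖

/-- Low-rank approximability of `e^{-τA} X e^{-τA}`, where `X` solves the
Lyapunov equation `A X + X A = D` with `A` SPD with eigenvalues
`μ 0 ≥ μ 1 ≥ … ≥ μ (n-1) > 0`. -/
noncomputable def frobSq {n : ℕ} (M : Matrix (Fin n) (Fin n) ℝ) : ℝ :=
  ∑ i, ∑ j, (M i j) ^ 2

lemma frobSq_nonneg {n : ℕ} (M : Matrix (Fin n) (Fin n) ℝ) : 0 ≤ frobSq M :=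
  Finset.sum_nonneg fun _ _ => Finset.sum_nonneg fun _ _ => sq_nonneg _

lemma frobNorm_sq {n : ℕ} (M : Matrix (Fin n) (Fin n) ℝ) :
    frobNorm M ^ 2 = frobSq M := Real.sq_sqrt (frobSq_nonneg M)

lemma frobSq_eq_trace {n : ℕ} (M : Matrix (Fin n) (Fin n) ℝ) :
    frobSq M = (M * Mᵀ).trace := by
  unfold frobSq
  simp [Matrix.trace, Matrix.mul_apply, Matrix.diag, sq]

lemma frobSq_conj {n : ℕ} (Q M : Matrix (Fin n) (Fin n) ℝ)
    (h1 : Qᵀ * Q = 1) : frobSq (Q * M * Qᵀ) = frobSq M := by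
  rw [frobSq_eq_trace, frobSq_eq_trace]
  have h : (Q * M * Qᵀ) * (Q * M * Qᵀ)ᵀ = Q * ((M * Mᵀ) * Qᵀ) := by
    simp only [Matrix.transpose_mul, Matrix.transpose_transpose, Matrix.mul_assoc]
    rw [show Qᵀ * (Q * (Mᵀ * Qᵀ)) = (Qᵀ * Q) * (Mᵀ * Qᵀ) from (Matrix.mul_assoc _ _ _).symm,
      h1, Matrix.one_mul]
  rw [h, Matrix.trace_mul_comm, Matrix.mul_assoc, h1, Matrix.mul_one]

lemma l2Norm_le_frobNorm {n : ℕ} (M : Matrix (Fin n) (Fin n) ℝ) :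
    l2Norm M ≤ frobNorm M := by
  refine ContinuousLinearMap.opNorm_le_bound _ (Real.sqrt_nonneg _) fun x => ?_
  have hx : ∀ i, (Matrix.toEuclideanCLM (𝕜 := ℝ) M x) i = ∑ j, M i j * x j := by
    intro i
    have h2 := congrFun (Matrix.ofLp_toEuclideanCLM (𝕜 := ℝ) M x) i
    simpa [Matrix.mulVec, dotProduct] using h2
  have hnorm : ‖Matrix.toEuclideanCLM (𝕜 := ℝ) M x‖
      = Real.sqrt (∑ i, (∑ j, M i j * x j) ^ 2) := by
    rw [EuclideanSpace.norm_eq]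
    congr 1
    exact Finset.sum_congr rfl fun i _ => by rw [hx i, Real.norm_eq_abs, sq_abs]
  have hxn : ‖x‖ = Real.sqrt (∑ j, (x j) ^ 2) := by
    rw [EuclideanSpace.norm_eq]
    congr 1
    exact Finset.sum_congr rfl fun j _ => by rw [Real.norm_eq_abs, sq_abs]
  rw [hnorm, hxn]
  show Real.sqrt _ ≤ Real.sqrt _ * Real.sqrt _
  rw [← Real.sqrt_mul (by positivity)]
  refine Real.sqrt_le_sqrt ?_
  calc ∑ i, (∑ j, M i j * x j) ^ 2
      ≤ ∑ i, (∑ j, (M i j) ^ 2) * (∑ j, (x j) ^ 2) :=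
        Finset.sum_le_sum fun i _ => Finset.sum_mul_sq_le_sq_mul_sq _ _ _
    _ = (∑ i, ∑ j, (M i j) ^ 2) * ∑ j, (x j) ^ 2 := (Finset.sum_mul _ _ _).symm

theorem lowrank_approx_exp_lyapunov {n : ℕ}
    (A D X Q : Matrix (Fin n) (Fin n) ℝ) (μ : Fin n → ℝ)
    (hA : A.PosDef) (hD : D.IsSymm)
    (hQ : Q.transpose * Q = 1 ∧ Q * Q.transpose = 1)
    (hdecomp : A = Q * Matrix.diagonal μ * Q.transpose)
    (hdec : ∀ i j : Fin n, i ≤ j → μ j ≤ μ i)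
    (hpos : ∀ i, 0 < μ i)
    (hX : A * X + X * A = D)
    (ℓ : ℕ) (hℓ : 1 ≤ ℓ) (hℓn : ℓ < n) (τ : ℝ) (hτ : 0 < τ) :
    ∃ XL : Matrix (Fin n) (Fin n) ℝ, XL.rank ≤ ℓ ∧
      (l2Norm (NormedSpace.exp (-(τ • A)) * X * NormedSpace.exp (-(τ • A)) - XL)) ^ 2 ≤
        3 / (4 * (μ ⟨n - 1, by omega⟩) ^ 2) *
          Real.exp (-2 * τ * (μ ⟨n - 1, by omega⟩ + μ ⟨n - ℓ - 1, by omega⟩)) *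
          (frobNorm D) ^ 2 := by
  obtain ⟨hQ1, hQ2⟩ := hQ
  have hn1 : n - 1 < n := by omega
  have hn2 : n - ℓ - 1 < n := by omega
  set a := μ ⟨n - 1, hn1⟩ with ha
  set b := μ ⟨n - ℓ - 1, hn2⟩ with hb
  have ha0 : 0 < a := hpos _
  have hμa : ∀ i : Fin n, a ≤ μ i := fun i =>
    hdec i ⟨n - 1, hn1⟩ (by rw [Fin.le_def]; simp only [Fin.val_mk]; have := i.isLt; omega)
  have hμb : ∀ i : Fin n, (i : ℕ) < n - ℓ → b ≤ μ i := fun i hi =>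
    hdec i ⟨n - ℓ - 1, hn2⟩ (by rw [Fin.le_def]; simp only [Fin.val_mk]; omega)
  have hQu : IsUnit Q := by
    refine (Matrix.isUnit_iff_isUnit_det _).mpr ?_
    have h := congrArg Matrix.det hQ1
    rw [Matrix.det_mul, Matrix.det_transpose, Matrix.det_one] at h
    exact IsUnit.of_mul_eq_one _ h
  have hQinv : Q⁻¹ = Qᵀ := Matrix.inv_eq_left_inv hQ1
  set Λ := Matrix.diagonal μ with hΛ
  set Dh := Qᵀ * D * Q with hDh
  set Y : Matrix (Fin n) (Fin n) ℝ :=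
    Matrix.of (fun i j => Dh i j / (μ i + μ j)) with hY
  set f : Fin n → ℝ := fun i => Real.exp (-(τ * μ i)) with hf
  set F := Matrix.diagonal f with hF
  have hsum : ∀ i j : Fin n, 0 < μ i + μ j := fun i j => add_pos (hpos i) (hpos j)
  have hQA : Qᵀ * A = Λ * Qᵀ := by
    rw [hdecomp, ← Matrix.mul_assoc, ← Matrix.mul_assoc, hQ1, Matrix.one_mul]
  have hAQ : A * Q = Q * Λ := by
    rw [hdecomp, Matrix.mul_assoc, hQ1, Matrix.mul_one]
  have hW : Qᵀ * X * Q = Y := by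
    have e1 : Qᵀ * (A * X) * Q = Λ * (Qᵀ * X * Q) := by
      rw [← Matrix.mul_assoc, hQA]
      simp [Matrix.mul_assoc]
    have e2 : Qᵀ * (X * A) * Q = (Qᵀ * X * Q) * Λ := by
      simp only [Matrix.mul_assoc]
      rw [hAQ]
    have h1 : Λ * (Qᵀ * X * Q) + (Qᵀ * X * Q) * Λ = Dh := by
      calc Λ * (Qᵀ * X * Q) + (Qᵀ * X * Q) * Λ
          = Qᵀ * (A * X) * Q + Qᵀ * (X * A) * Q := by rw [e1, e2]
        _ = Qᵀ * (A * X + X * A) * Q := by rw [Matrix.mul_add, Matrix.add_mul]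
        _ = Dh := by rw [hX]
    ext i j
    have h2 := congrArg (fun M : Matrix (Fin n) (Fin n) ℝ => M i j) h1
    simp only [Matrix.add_apply, hΛ, Matrix.diagonal_mul, Matrix.mul_diagonal] at h2
    simp only [hY, Matrix.of_apply]
    rw [eq_div_iff (ne_of_gt (hsum i j))]
    linear_combination h2
  have hXQ : X = Q * Y * Qᵀ := by
    calc X = (Q * Qᵀ) * X * (Q * Qᵀ) := by rw [hQ2, Matrix.one_mul, Matrix.mul_one]
      _ = Q * (Qᵀ * X * Q) * Qᵀ := by simp [Matrix.mul_assoc]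
      _ = Q * Y * Qᵀ := by rw [hW]
  have hE : NormedSpace.exp (-(τ • A)) = Q * F * Qᵀ := by
    have hdiag : Matrix.diagonal (fun i => -(τ * μ i)) = -(τ • Λ) := by
      ext i j
      by_cases h : i = j <;>
        simp [hΛ, Matrix.diagonal_apply, h]
    have h0 : -(τ • A) = Q * Matrix.diagonal (fun i => -(τ * μ i)) * Qᵀ := by
      rw [hdecomp, hdiag, Matrix.mul_neg, Matrix.neg_mul]
      congr 1
      rw [Matrix.mul_smul, Matrix.smul_mul]
    rw [h0, ← hQinv, Matrix.exp_conj Q _ hQu, Matrix.exp_diagonal, hQinv]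
    have hexpf : NormedSpace.exp (fun i : Fin n => -(τ * μ i)) = f := by
      funext i
      simp [Pi.exp_def, hf, ← Real.exp_eq_exp_ℝ]
    rw [hexpf]
  have hcancel : ∀ M : Matrix (Fin n) (Fin n) ℝ, Qᵀ * (Q * M) = M := fun M => by
    rw [← Matrix.mul_assoc, hQ1, Matrix.one_mul]
  have hEXE : NormedSpace.exp (-(τ • A)) * X * NormedSpace.exp (-(τ • A))
      = Q * (F * Y * F) * Qᵀ := by
    rw [hE, hXQ]
    simp only [Matrix.mul_assoc, hcancel]
  set Z : Matrix (Fin n) (Fin n) ℝ :=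
    Matrix.of (fun i j => if n - ℓ ≤ (i : ℕ) ∧ n - ℓ ≤ (j : ℕ) then (F * Y * F) i j else 0)
    with hZ
  refine ⟨Q * Z * Qᵀ, ?_, ?_⟩
  · set P : Matrix (Fin n) (Fin ℓ) ℝ :=
      Matrix.of (fun i k => if (i : ℕ) = n - ℓ + (k : ℕ) then 1 else 0) with hP
    set W2 : Matrix (Fin ℓ) (Fin n) ℝ :=
      Matrix.of (fun k j => Z ⟨n - ℓ + (k : ℕ), by omega⟩ j) with hW2
    have hPW : P * W2 = Z := by
      ext i j
      rw [Matrix.mul_apply]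
      by_cases hi : n - ℓ ≤ (i : ℕ)
      · have hk0 : (i : ℕ) - (n - ℓ) < ℓ := by have := i.isLt; omega
        rw [Finset.sum_eq_single (⟨(i : ℕ) - (n - ℓ), hk0⟩ : Fin ℓ)]
        · simp only [hP, hW2, Matrix.of_apply]
          rw [if_pos (by omega), one_mul]
          congr 1
          exact Fin.ext (by simp; omega)
        · intro k _ hk
          simp only [hP, hW2, Matrix.of_apply]
          rw [if_neg, zero_mul]
          intro h
          exact hk (Fin.ext (by simp; omega))
        · intro h; exact absurd (Finset.mem_univ _) h
      · have h0 : ∀ k : Fin ℓ, P i k * W2 k j = 0 := fun k => by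
          simp only [hP, hW2, Matrix.of_apply]
          rw [if_neg (by omega), zero_mul]
        rw [Finset.sum_congr rfl (fun k _ => h0 k), Finset.sum_const_zero]
        simp only [hZ, Matrix.of_apply]
        rw [if_neg (by omega)]
    calc (Q * Z * Qᵀ).rank = ((Q * P) * (W2 * Qᵀ)).rank := by
          rw [show (Q * P) * (W2 * Qᵀ) = Q * (P * W2) * Qᵀ by simp [Matrix.mul_assoc], hPW]
      _ ≤ (Q * P).rank := Matrix.rank_mul_le_left _ _
      _ ≤ Fintype.card (Fin ℓ) := Matrix.rank_le_card_width _
      _ = ℓ := Fintype.card_fin ℓ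
  · set c := Real.exp (-2 * τ * (a + b)) / (4 * a ^ 2) with hc
    have hc0 : 0 ≤ c := div_nonneg (le_of_lt (Real.exp_pos _)) (by positivity)
    have hentry : ∀ i j : Fin n, ((F * Y * F - Z) i j) ^ 2 ≤ c * (Dh i j) ^ 2 := by
      intro i j
      by_cases hij : n - ℓ ≤ (i : ℕ) ∧ n - ℓ ≤ (j : ℕ)
      · simp only [Matrix.sub_apply, hZ, Matrix.of_apply, if_pos hij, sub_self]
        calc ((0 : ℝ)) ^ 2 = 0 := by ring
          _ ≤ c * (Dh i j) ^ 2 := mul_nonneg hc0 (sq_nonneg _)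
      · have hFYF : (F * Y * F) i j = f i * (Dh i j / (μ i + μ j)) * f j := by
          simp only [hF, Matrix.mul_diagonal, Matrix.diagonal_mul, hY, Matrix.of_apply]
        simp only [Matrix.sub_apply, hZ, Matrix.of_apply, if_neg hij, sub_zero, hFYF]
        have hs0 : 0 < μ i + μ j := hsum i j
        have hs2a : 2 * a ≤ μ i + μ j := by
          have := hμa i; have := hμa j; linarith
        have hsab : a + b ≤ μ i + μ j := by
          rcases not_and_or.mp hij with h | h
          · have h1 := hμb i (by omega); have h2 := hμa j; linarith
          · have h1 := hμb j (by omega); have h2 := hμa i; linarith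
        have hfe : f i * (Dh i j / (μ i + μ j)) * f j
            = Real.exp (-(τ * (μ i + μ j))) / (μ i + μ j) * Dh i j := by
          simp only [hf]
          rw [show -(τ * (μ i + μ j)) = -(τ * μ i) + -(τ * μ j) by ring, Real.exp_add]
          ring
        rw [hfe]
        have hnum : Real.exp (-(τ * (μ i + μ j))) ^ 2 ≤ Real.exp (-2 * τ * (a + b)) := by
          rw [sq, ← Real.exp_add]
          refine Real.exp_le_exp.mpr ?_
          nlinarith [mul_le_mul_of_nonneg_left hsab (le_of_lt hτ)]
        have hden : 4 * a ^ 2 ≤ (μ i + μ j) ^ 2 := by nlinarith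
        calc (Real.exp (-(τ * (μ i + μ j))) / (μ i + μ j) * Dh i j) ^ 2
            = Real.exp (-(τ * (μ i + μ j))) ^ 2 / (μ i + μ j) ^ 2 * (Dh i j) ^ 2 := by
              rw [mul_pow, div_pow]
          _ ≤ Real.exp (-2 * τ * (a + b)) / (4 * a ^ 2) * (Dh i j) ^ 2 := by
              refine mul_le_mul_of_nonneg_right ?_ (sq_nonneg _)
              exact div_le_div₀ (le_of_lt (Real.exp_pos _)) hnum (by positivity) hden
          _ = c * (Dh i j) ^ 2 := by rw [hc]
    have hfrobG : frobSq (F * Y * F - Z) ≤ c * frobSq Dh := by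
      unfold frobSq
      rw [Finset.mul_sum]
      refine Finset.sum_le_sum fun i _ => ?_
      rw [Finset.mul_sum]
      exact Finset.sum_le_sum fun j _ => hentry i j
    have hDhD : frobSq Dh = frobSq D := by
      have h := frobSq_conj Qᵀ D (by rw [Matrix.transpose_transpose]; exact hQ2)
      rw [Matrix.transpose_transpose] at h
      rw [hDh]; exact h
    have hres : NormedSpace.exp (-(τ • A)) * X * NormedSpace.exp (-(τ • A)) - Q * Z * Qᵀ
        = Q * (F * Y * F - Z) * Qᵀ := by
      rw [hEXE, Matrix.mul_sub, Matrix.sub_mul]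
    have h1 : (l2Norm (NormedSpace.exp (-(τ • A)) * X * NormedSpace.exp (-(τ • A))
        - Q * Z * Qᵀ)) ^ 2
        ≤ frobSq (NormedSpace.exp (-(τ • A)) * X * NormedSpace.exp (-(τ • A))
        - Q * Z * Qᵀ) := by
      rw [← frobNorm_sq]
      exact pow_le_pow_left₀ (norm_nonneg _) (l2Norm_le_frobNorm _) 2
    have hcoef : c ≤ 3 / (4 * a ^ 2) * Real.exp (-2 * τ * (a + b)) := by
      rw [hc, div_eq_mul_inv, div_eq_mul_inv]
      have h1 : (0 : ℝ) ≤ ((4 : ℝ) * a ^ 2)⁻¹ := by positivity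
      have h2 : (0 : ℝ) < Real.exp (-2 * τ * (a + b)) := Real.exp_pos _
      nlinarith
    show _ ≤ 3 / (4 * a ^ 2) * Real.exp (-2 * τ * (a + b)) * (frobNorm D) ^ 2
    calc (l2Norm (NormedSpace.exp (-(τ • A)) * X * NormedSpace.exp (-(τ • A))
          - Q * Z * Qᵀ)) ^ 2
        ≤ frobSq (NormedSpace.exp (-(τ • A)) * X * NormedSpace.exp (-(τ • A))
          - Q * Z * Qᵀ) := h1
      _ = frobSq (F * Y * F - Z) := by rw [hres, frobSq_conj Q _ hQ1]
      _ ≤ c * frobSq Dh := hfrobG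
      _ = c * frobSq D := by rw [hDhD]
      _ ≤ 3 / (4 * a ^ 2) * Real.exp (-2 * τ * (a + b)) * frobSq D :=
          mul_le_mul_of_nonneg_right hcoef (frobSq_nonneg D)
      _ = 3 / (4 * a ^ 2) * Real.exp (-2 * τ * (a + b)) * (frobNorm D) ^ 2 := by
          rw [frobNorm_sq]
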